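/- For every subset A ⊆ ℚ̄, the equality inf I_N(A ∖ μ_A) = inf I_B(A) holds, where the infima are taken in ℝ ∪ {±∞}. -/

import Mathlib

open Polynomial

noncomputable section

/-- The primitive integer minimal polynomial of an algebraic number `x ∈ ℂ`. -/
def intMinpoly (x : ℂ) : Polynomial ℤ :=
  (IsLocalization.integerNormalization (nonZeroDivisors ℤ) (minpoly ℚ x)).primPart

/-- `deg(x) = [ℚ(x):ℚ]`, the degree of an algebraic number. -/
def degQ (x : ℂ) : ℕ := (minpoly ℚ x).natDegree

/-- The absolute logarithmic Weil height of an algebraic number `x`, given as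
`(1/deg x) · log (|a₀| · ∏ max(1,|conjugate|))` where `a₀` is the leading coefficient of the
primitive integer minimal polynomial of `x` and the product runs over the complex roots
of that polynomial (i.e. the conjugates of `x`). -/
def weilHeight (x : ℂ) : ℝ :=
  (degQ x : ℝ)⁻¹ *
    Real.log (((intMinpoly x).leadingCoeff.natAbs : ℝ) *
      (((intMinpoly x).map (Int.castRingHom ℂ)).roots.map
        (fun z => max 1 ‖z‖)).prod)

/-- The `γ`-weighted Weil height `h_γ(x) = deg(x)^γ · h(x)`. -/
def wheight (γ : ℝ) (x : ℂ) : ℝ := (degQ x : ℝ) ^ γ * weilHeight x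

/-- `x` is a root of unity. -/
def IsRootOfUnity (x : ℂ) : Prop := ∃ n : ℕ, 0 < n ∧ x ^ n = 1

/-- `μ_A`, the set of roots of unity contained in `A`. -/
def muSet (A : Set ℂ) : Set ℂ := {a ∈ A | IsRootOfUnity a}

/-- `A` has the `γ`-Northcott property: for every `C > 0` there are only finitely many
`a ∈ A` with `h_γ(a) < C`. -/
def NorthcottProp (γ : ℝ) (A : Set ℂ) : Prop :=
  ∀ C : ℝ, 0 < C → {a ∈ A | wheight γ a < C}.Finite

/-- `A` has the `γ`-Bogomolov property: for some `C > 0` there are only finitely many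
`a ∈ A ∖ μ_A` with `h_γ(a) < C`. -/
def BogomolovProp (γ : ℝ) (A : Set ℂ) : Prop :=
  ∃ C : ℝ, 0 < C ∧ {a ∈ A \ muSet A | wheight γ a < C}.Finite

/-- The `γ`-Northcott number `Nor_γ(A) = inf {C > 0 | N_γ(A,C) = ∞}` (equal to `∞` if
`N_γ(A,C)` is finite for every `C`). -/
def northcottNumber (γ : ℝ) (A : Set ℂ) : EReal :=
  sInf {x : EReal | ∃ C : ℝ, x = (C : EReal) ∧ 0 < C ∧ ¬ {a ∈ A | wheight γ a < C}.Finite}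

/-- `I_N(A) = {γ ∈ ℝ | A has γ-(N)}`. -/
def IN (A : Set ℂ) : Set ℝ := {γ | NorthcottProp γ A}

/-- `I_B(A) = {γ ∈ ℝ | A has γ-(B)}`. -/
def IB (A : Set ℂ) : Set ℝ := {γ | BogomolovProp γ A}

lemma degQ_pos {x : ℂ} (hx : IsAlgebraic ℚ x) : 0 < degQ x :=
  minpoly.natDegree_pos hx.isIntegral

lemma intNorm_ne_zero {x : ℂ} (hx : IsAlgebraic ℚ x) :
    IsLocalization.integerNormalization (nonZeroDivisors ℤ) (minpoly ℚ x) ≠ 0 := by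
  rw [Ne, IsFractionRing.integerNormalization_eq_zero_iff]
  exact minpoly.ne_zero hx.isIntegral

lemma intMinpoly_ne_zero (x : ℂ) : intMinpoly x ≠ 0 :=
  Polynomial.primPart_ne_zero _

lemma natDegree_intMinpoly {x : ℂ} (hx : IsAlgebraic ℚ x) :
    (intMinpoly x).natDegree = degQ x := by
  rw [intMinpoly, natDegree_primPart]
  obtain ⟨b, hb⟩ := IsLocalization.integerNormalization_map_to_map (nonZeroDivisors ℤ)
    (minpoly ℚ x)
  have hinj : Function.Injective (algebraMap ℤ ℚ) := fun a b h => by exact_mod_cast h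
  rw [← natDegree_map_eq_of_injective hinj, hb]
  have hb0 : ((b : ℤ) : ℚ) ≠ 0 := by
    exact_mod_cast nonZeroDivisors.coe_ne_zero b
  rw [← Int.cast_smul_eq_zsmul ℚ, smul_eq_C_mul, natDegree_C_mul hb0]
  rfl

lemma aeval_intMinpoly {x : ℂ} (hx : IsAlgebraic ℚ x) :
    ((intMinpoly x).map (Int.castRingHom ℂ)).eval x = 0 := by
  have h1 : Polynomial.aeval x (IsLocalization.integerNormalization (nonZeroDivisors ℤ)
      (minpoly ℚ x)) = 0 :=
    IsLocalization.integerNormalization_aeval_eq_zero _ _ (minpoly.aeval ℚ x)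
  set N := IsLocalization.integerNormalization (nonZeroDivisors ℤ) (minpoly ℚ x) with hN
  have h2 : Polynomial.aeval x (C N.content * N.primPart) = 0 := by
    rw [← eq_C_content_mul_primPart]; exact h1
  rw [map_mul, aeval_C] at h2
  have hc : (algebraMap ℤ ℂ) N.content ≠ 0 := by
    simp only [Ne, algebraMap_int_eq, eq_intCast, Int.cast_eq_zero]
    exact fun h => intNorm_ne_zero hx (content_eq_zero_iff.1 h)
  rcases mul_eq_zero.1 h2 with h | h
  · exact absurd h hc
  · rw [← eval_map_algebraMap] at h
    exact h

lemma one_le_lead (x : ℂ) : (1 : ℝ) ≤ ((intMinpoly x).leadingCoeff.natAbs : ℝ) := by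
  have h : (intMinpoly x).leadingCoeff ≠ 0 := leadingCoeff_ne_zero.2 (intMinpoly_ne_zero x)
  exact_mod_cast Nat.one_le_iff_ne_zero.2 (Int.natAbs_ne_zero.2 h)

lemma mprod_one_le (s : Multiset ℝ) (h : ∀ x ∈ s, 1 ≤ x) : 1 ≤ s.prod := by
  induction s using Multiset.induction_on with
  | empty => simp
  | cons a t ih =>
    simp only [Multiset.prod_cons]
    have ha := h a (Multiset.mem_cons_self a t)
    have ht := ih (fun x hx => h x (Multiset.mem_cons_of_mem hx))
    nlinarith

lemma mprod_single_le (s : Multiset ℝ) (h : ∀ x ∈ s, 1 ≤ x) {x : ℝ} (hx : x ∈ s) :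
    x ≤ s.prod := by
  obtain ⟨t, rfl⟩ := Multiset.exists_cons_of_mem hx
  rw [Multiset.prod_cons]
  have ht := mprod_one_le t (fun y hy => h y (Multiset.mem_cons_of_mem hy))
  have hx1 := h x (Multiset.mem_cons_self x t)
  nlinarith

lemma one_le_rootprod (x : ℂ) :
    (1 : ℝ) ≤ ((((intMinpoly x).map (Int.castRingHom ℂ)).roots.map
      (fun z => max 1 ‖z‖)).prod) :=
  mprod_one_le _ (by
    intro y hy
    obtain ⟨z, _, rfl⟩ := Multiset.mem_map.1 hy
    exact le_max_left _ _)

lemma weilHeight_nonneg (x : ℂ) : 0 ≤ weilHeight x := by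
  apply mul_nonneg (by positivity)
  apply Real.log_nonneg
  exact one_le_mul_of_one_le_of_one_le (one_le_lead x) (one_le_rootprod x)

/-- Northcott's theorem for this height. -/
lemma northcott_finite (D : ℕ) (H : ℝ) :
    {x : ℂ | IsAlgebraic ℚ x ∧ degQ x ≤ D ∧ weilHeight x ≤ H}.Finite := by
  classical
  set B : ℝ := Real.exp (D * max H 0) with hBdef
  have hB1 : 1 ≤ B := Real.one_le_exp (by positivity)
  set K : ℝ := B * (max B 1 ^ D * D.choose (D / 2)) with hKdef
  have hU : (Set.Icc (-⌈K⌉) ⌈K⌉ : Set ℤ).Finite := Set.finite_Icc _ _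
  refine (Polynomial.bUnion_roots_finite (Int.castRingHom ℂ) D hU).subset ?_
  rintro x ⟨hx, hdeg, hht⟩
  set q : Polynomial ℤ := intMinpoly x with hq
  set qC : Polynomial ℂ := q.map (Int.castRingHom ℂ) with hqC
  have hq0 : q ≠ 0 := intMinpoly_ne_zero x
  have hinjC : Function.Injective (Int.castRingHom ℂ) := fun a b h => by simpa using h
  have hqC0 : qC ≠ 0 := by
    rw [hqC, Ne, Polynomial.map_eq_zero_iff hinjC]
    exact hq0
  have hdq : q.natDegree = degQ x := natDegree_intMinpoly hx
  have hqCdeg : qC.natDegree = degQ x := by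
    rw [hqC, natDegree_map_eq_of_injective hinjC, hdq]
  set a0 : ℝ := (q.leadingCoeff.natAbs : ℝ) with ha0
  set P : Multiset ℝ := qC.roots.map (fun z => max 1 ‖z‖) with hP
  have ha0_1 : (1:ℝ) ≤ a0 := one_le_lead x
  have hP1 : (1:ℝ) ≤ P.prod := one_le_rootprod x
  set M : ℝ := a0 * P.prod with hM
  have hM1 : (1:ℝ) ≤ M := one_le_mul_of_one_le_of_one_le ha0_1 hP1
  -- Mahler measure bound
  have hd1 : (1:ℝ) ≤ (degQ x : ℝ) := by exact_mod_cast degQ_pos hx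
  have hMB : M ≤ B := by
    have hlog : Real.log M = (degQ x : ℝ) * weilHeight x := by
      rw [weilHeight]
      field_simp
      rfl
    have h2 : Real.log M ≤ (D : ℝ) * max H 0 := by
      rw [hlog]
      calc (degQ x : ℝ) * weilHeight x ≤ (degQ x : ℝ) * max H 0 := by
            apply mul_le_mul_of_nonneg_left (le_max_of_le_left hht) (by linarith)
        _ ≤ (D : ℝ) * max H 0 := by
            apply mul_le_mul_of_nonneg_right _ (le_max_right _ _)
            exact_mod_cast hdeg
    rw [← Real.exp_log (by linarith : (0:ℝ) < M)]
    exact Real.exp_le_exp.2 h2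
  -- root bounds
  have hroots : ∀ z ∈ qC.roots, ‖z‖ ≤ B := by
    intro z hz
    have h1 : max 1 ‖z‖ ≤ P.prod := by
      apply mprod_single_le
      · intro y hy
        obtain ⟨w, _, rfl⟩ := Multiset.mem_map.1 hy
        exact le_max_left _ _
      · exact Multiset.mem_map_of_mem _ hz
    have h2 : P.prod ≤ M := le_mul_of_one_le_left (by linarith) ha0_1
    calc ‖z‖ = ‖z‖ := rfl
      _ ≤ max 1 ‖z‖ := le_max_right _ _
      _ ≤ B := by linarith
  have ha0B : a0 ≤ B := by
    have : a0 ≤ M := le_mul_of_one_le_right (by linarith) hP1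
    linarith
  -- coefficient bound
  have hcoeff : ∀ i, q.coeff i ∈ Set.Icc (-⌈K⌉) ⌈K⌉ := by
    intro i
    set Pm : Polynomial ℂ := (qC.roots.map fun a => X - C a).prod with hPm
    have hsplit : Splits qC := IsAlgClosed.splits qC
    have hfact : qC = C qC.leadingCoeff * Pm := hsplit.eq_prod_roots
    have hmon : Pm.Monic := monic_multiset_prod_of_monic _ _ fun a _ => monic_X_sub_C a
    have hPmdeg : Pm.natDegree ≤ D := by
      rw [hPm, natDegree_multiset_prod_X_sub_C_eq_card]
      calc (Multiset.card qC.roots) ≤ qC.natDegree := qC.card_roots' 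
        _ ≤ D := by rw [hqCdeg]; exact hdeg
    have hPmbd : ‖Pm.coeff i‖ ≤ max B 1 ^ D * D.choose (D / 2) := by
      have := Polynomial.coeff_bdd_of_roots_le (B := B) (RingHom.id ℂ) hmon
        (IsAlgClosed.splits _) hPmdeg ?_ i
      · rwa [Polynomial.map_id] at this
      · rw [Polynomial.map_id, hPm, roots_multiset_prod_X_sub_C]
        exact hroots
    have hlead : ‖qC.leadingCoeff‖ = a0 := by
      rw [hqC, leadingCoeff_map_of_injective hinjC, ha0, Nat.cast_natAbs]
      simp
    have hbd : |(q.coeff i : ℝ)| ≤ K := by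
      have h1 : ‖qC.coeff i‖ ≤ K := by
        rw [hfact]
        rw [coeff_C_mul, norm_mul, hlead]
        calc a0 * ‖Pm.coeff i‖ ≤ B * (max B 1 ^ D * D.choose (D / 2)) := by
              apply mul_le_mul ha0B hPmbd (norm_nonneg _) (by linarith)
          _ = K := rfl
      have h2 : qC.coeff i = ((q.coeff i : ℤ) : ℂ) := by
        rw [hqC, coeff_map]; rfl
      rw [h2, Complex.norm_intCast] at h1
      exact_mod_cast h1

    have : |q.coeff i| ≤ ⌈K⌉ := by
      have := hbd.trans (Int.le_ceil K)
      exact_mod_cast this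
    exact Set.mem_Icc.2 (abs_le.1 this)
  -- membership
  refine Set.mem_iUnion.2 ⟨q, Set.mem_iUnion.2 ⟨⟨by rw [hdq]; exact hdeg, hcoeff⟩, ?_⟩⟩
  exact Finset.mem_coe.2 (Multiset.mem_toFinset.2 ((mem_roots hqC0).2 (aeval_intMinpoly hx)))

lemma bogomolov_to_northcott {A : Set ℂ} (hA : ∀ a ∈ A, IsAlgebraic ℚ a) {γ γ' : ℝ}
    (h : BogomolovProp γ A) (hlt : γ < γ') : NorthcottProp γ' (A \ muSet A) := by
  obtain ⟨C, hC, hfin⟩ := h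
  intro C' hC'
  set r : ℝ := (C' / C) ^ (1 / (γ' - γ)) with hr
  set Dn : ℕ := ⌈r⌉₊ with hDn
  set Mx : ℝ := max 1 (Dn : ℝ) with hMx
  set H : ℝ := C' * Mx ^ |γ'| with hH
  have key : {a ∈ A \ muSet A | wheight γ' a < C'} ⊆
      {a ∈ A \ muSet A | wheight γ a < C} ∪
        {x : ℂ | IsAlgebraic ℚ x ∧ degQ x ≤ Dn ∧ weilHeight x ≤ H} := by
    rintro a ⟨haA, hw'⟩
    by_cases hlow : wheight γ a < C
    · exact Or.inl ⟨haA, hlow⟩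
    push_neg at hlow
    right
    have halg : IsAlgebraic ℚ a := hA a haA.1
    set d : ℝ := (degQ a : ℝ) with hd
    have hd1 : (1:ℝ) ≤ d := by rw [hd]; exact_mod_cast degQ_pos halg
    have hd0 : (0:ℝ) < d := by linarith
    have hdγ : (0:ℝ) < d ^ γ := Real.rpow_pos_of_pos hd0 γ
    have hdγ' : (0:ℝ) < d ^ γ' := Real.rpow_pos_of_pos hd0 γ'
    have hw'' : d ^ γ' * weilHeight a < C' := hw'
    have hlow' : C ≤ d ^ γ * weilHeight a := hlow
    have hhpos : 0 < weilHeight a := by nlinarith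
    have hsub : d ^ (γ' - γ) < C' / C := by
      have h1 : d ^ (γ' - γ) = (d ^ γ' * weilHeight a) / (d ^ γ * weilHeight a) := by
        rw [Real.rpow_sub hd0]
        field_simp
      rw [h1]
      exact div_lt_div₀ hw'' hlow' hC'.le hC
    have hdr : d < r := by
      have hpos : 0 < γ' - γ := by linarith
      have h2 : (d ^ (γ' - γ)) ^ (1 / (γ' - γ)) < r := by
        apply Real.rpow_lt_rpow (Real.rpow_nonneg hd0.le _) hsub (by positivity)
      rw [← Real.rpow_mul hd0.le, mul_one_div, div_self (by linarith : γ' - γ ≠ 0),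
        Real.rpow_one] at h2
      exact h2
    have hdeg : degQ a ≤ Dn := by
      have h5 : d < (Dn : ℝ) := lt_of_lt_of_le hdr (Nat.le_ceil r)
      rw [hd] at h5
      exact_mod_cast h5.le
    have hht : weilHeight a ≤ H := by
      have h1 : weilHeight a < C' / d ^ γ' := by
        rw [lt_div_iff₀ hdγ']
        linarith [hw'']
      have h2 : C' / d ^ γ' = C' * d ^ (-γ') := by
        rw [Real.rpow_neg hd0.le]
        ring
      have h3 : d ^ (-γ') ≤ d ^ |γ'| :=
        Real.rpow_le_rpow_of_exponent_le hd1 (neg_le_abs γ')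
      have h4 : d ^ |γ'| ≤ Mx ^ |γ'| := by
        apply Real.rpow_le_rpow hd0.le _ (abs_nonneg γ')
        calc d ≤ (Dn : ℝ) := (lt_of_lt_of_le hdr (Nat.le_ceil r)).le
          _ ≤ Mx := le_max_right _ _
      have : C' * d ^ (-γ') ≤ C' * Mx ^ |γ'| :=
        mul_le_mul_of_nonneg_left (h3.trans h4) hC'.le
      rw [hH]
      linarith [h1.trans_eq h2]
    exact ⟨halg, hdeg, hht⟩
  exact (hfin.union (northcott_finite Dn H)).subset key

lemma northcott_to_bogomolov {A : Set ℂ} {γ : ℝ} (h : NorthcottProp γ (A \ muSet A)) :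
    BogomolovProp γ A :=
  ⟨1, one_pos, h 1 one_pos⟩


/-- For every `A ⊆ ℚ̄`, `inf I_N(A ∖ μ_A) = inf I_B(A)` (infima taken in `ℝ ∪ {±∞}`). -/
theorem inf_IN_diff_mu_eq_inf_IB (A : Set ℂ) (hA : ∀ a ∈ A, IsAlgebraic ℚ a) :
    sInf ((fun γ : ℝ => (γ : EReal)) '' IN (A \ muSet A)) =
      sInf ((fun γ : ℝ => (γ : EReal)) '' IB A) := by
  apply le_antisymm
  · apply le_sInf
    rintro b ⟨γ, hγ, rfl⟩
    by_contra hcon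
    push_neg at hcon
    obtain ⟨z, hz1, hz2⟩ := EReal.exists_between_coe_real hcon
    have hzIN : z ∈ IN (A \ muSet A) :=
      bogomolov_to_northcott hA hγ (by exact_mod_cast hz1)
    exact absurd (sInf_le (Set.mem_image_of_mem _ hzIN)) (not_le.2 hz2)
  · apply sInf_le_sInf
    rintro b ⟨γ, hγ, rfl⟩
    exact Set.mem_image_of_mem _ (northcott_to_bogomolov hγ)

end
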